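/- For every integer k ≥ 2 and pairwise distinct positive real numbers e₀, e₁, …, e_{k−1}, one has ∫₀^1 (1+θe₀)^{−2} ∏_{j=1}^{k−1} (1 − 1/(1+θe_j)) dθ = (1/(1+e₀))·∏_{i=1}^{k−1} e_i/(e_i−e₀) + ∑_{j=1}^{k−1} [e_j/(e_j−e₀)²]·(∏_{1≤i≤k−1, i≠j} e_i/(e_i−e_j))·log((1+e₀)/(1+e_j)). -/

import Mathlib

open MeasureTheory Real

open Finset in
private lemma pf_key (a : ℝ) (e : ℕ → ℝ) (S : Finset ℕ) :
    (∀ j ∈ S, e j ≠ 0) → (∀ j ∈ S, e j ≠ a) →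
    (∀ i ∈ S, ∀ j ∈ S, i ≠ j → e i ≠ e j) →
    ∀ θ : ℝ, 1 + θ * a ≠ 0 → (∀ j ∈ S, 1 + θ * e j ≠ 0) →
    ((1 + θ * a) ^ 2)⁻¹ * ∏ j ∈ S, (θ * e j / (1 + θ * e j))
      = (∏ i ∈ S, e i / (e i - a)) * ((1 + θ * a) ^ 2)⁻¹
        + ∑ j ∈ S, e j / (e j - a) ^ 2 * (∏ i ∈ S.erase j, e i / (e i - e j)) *
            (a / (1 + θ * a) - e j / (1 + θ * e j)) := by
  induction S using Finset.induction_on with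
  | empty => intro _ _ _ θ _ _; simp
  | @insert m S hm ih =>
    intro h0 hA hD θ hθa hθe
    have hm0 : e m ≠ 0 := h0 m (mem_insert_self _ _)
    have hma : e m - a ≠ 0 := sub_ne_zero.mpr (hA m (mem_insert_self _ _))
    have hjm : ∀ j ∈ S, e j - e m ≠ 0 := fun j hj =>
      sub_ne_zero.mpr (hD j (mem_insert_of_mem hj) m (mem_insert_self _ _)
        (ne_of_mem_of_not_mem hj hm))
    have hmj : ∀ j ∈ S, e m - e j ≠ 0 := fun j hj =>
      sub_ne_zero.mpr (hD m (mem_insert_self _ _) j (mem_insert_of_mem hj)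
        (ne_of_mem_of_not_mem hj hm).symm)
    have hθm : 1 + θ * e m ≠ 0 := hθe m (mem_insert_self _ _)
    have h0' : ∀ j ∈ S, e j ≠ 0 := fun j hj => h0 j (mem_insert_of_mem hj)
    have hA' : ∀ j ∈ S, e j ≠ a := fun j hj => hA j (mem_insert_of_mem hj)
    have hD' : ∀ i ∈ S, ∀ j ∈ S, i ≠ j → e i ≠ e j := fun i hi j hj =>
      hD i (mem_insert_of_mem hi) j (mem_insert_of_mem hj)
    have Hθ := ih h0' hA' hD' θ hθa (fun j hj => hθe j (mem_insert_of_mem hj))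
    -- IH at θ₀ = -(e m)⁻¹
    have hda : 1 + -(e m)⁻¹ * a = (e m - a) / e m := by field_simp; ring
    have hde : ∀ j ∈ S, 1 + -(e m)⁻¹ * e j = (e m - e j) / e m := by
      intro j hj; field_simp; ring
    have hθ0a : 1 + -(e m)⁻¹ * a ≠ 0 := by
      rw [hda]; exact div_ne_zero hma hm0
    have hθ0e : ∀ j ∈ S, 1 + -(e m)⁻¹ * e j ≠ 0 := by
      intro j hj; rw [hde j hj]; exact div_ne_zero (hmj j hj) hm0
    have H0 := ih h0' hA' hD' (-(e m)⁻¹) hθ0a hθ0e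
    have e1 : ∏ j ∈ S, (-(e m)⁻¹ * e j / (1 + -(e m)⁻¹ * e j)) = ∏ j ∈ S, e j / (e j - e m) :=
      Finset.prod_congr rfl fun j hj => by
        rw [hde j hj, div_div_eq_mul_div]
        rw [div_eq_div_iff (hmj j hj) (hjm j hj)]
        field_simp
        ring
    have e2 : ((1 + -(e m)⁻¹ * a) ^ 2)⁻¹ = e m ^ 2 / (e m - a) ^ 2 := by
      rw [hda]
      field_simp
    have hker : ∀ j ∈ S, a / (1 + -(e m)⁻¹ * a) - e j / (1 + -(e m)⁻¹ * e j)
        = e m * (a / (e m - a) - e j / (e m - e j)) := by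
      intro j hj
      rw [hda, hde j hj, div_div_eq_mul_div, div_div_eq_mul_div]
      field_simp [hma, hmj j hj]
    have e3 : ∑ j ∈ S, e j / (e j - a) ^ 2 * (∏ i ∈ S.erase j, e i / (e i - e j)) *
          (a / (1 + -(e m)⁻¹ * a) - e j / (1 + -(e m)⁻¹ * e j))
        = e m * ∑ j ∈ S, e j / (e j - a) ^ 2 * (∏ i ∈ S.erase j, e i / (e i - e j)) *
            (a / (e m - a) - e j / (e m - e j)) := by
      rw [Finset.mul_sum]
      exact Finset.sum_congr rfl fun j hj => by rw [hker j hj]; ring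
    rw [e1, e2, e3] at H0
    have hcoef : (∏ i ∈ S, e i / (e i - a)) * (e m / (e m - a) ^ 2)
          + ∑ j ∈ S, e j / (e j - a) ^ 2 * (∏ i ∈ S.erase j, e i / (e i - e j)) *
              (a / (e m - a) - e j / (e m - e j))
        = e m / (e m - a) ^ 2 * ∏ i ∈ S, e i / (e i - e m) := by
      apply mul_left_cancel₀ hm0
      rw [mul_add]
      linear_combination -H0
    have I1 : θ * e m / (1 + θ * e m) * ((1 + θ * a) ^ 2)⁻¹
        = e m / (e m - a) * ((1 + θ * a) ^ 2)⁻¹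
          + e m / (e m - a) ^ 2 * (a / (1 + θ * a) - e m / (1 + θ * e m)) := by
      field_simp
      ring
    have I2 : ∀ j ∈ S, θ * e m / (1 + θ * e m) * (a / (1 + θ * a) - e j / (1 + θ * e j))
        = e m / (e m - e j) * (a / (1 + θ * a) - e j / (1 + θ * e j))
          + (a / (e m - a) - e j / (e m - e j)) * (a / (1 + θ * a) - e m / (1 + θ * e m)) := by
      intro j hj
      have h1 := hθe j (mem_insert_of_mem hj)
      have h2 := hmj j hj
      field_simp
      ring
    rw [Finset.prod_insert hm, Finset.prod_insert hm, Finset.sum_insert hm,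
      Finset.erase_insert hm]
    have hsum : ∑ j ∈ S, e j / (e j - a) ^ 2 * (∏ i ∈ (insert m S).erase j, e i / (e i - e j)) *
          (a / (1 + θ * a) - e j / (1 + θ * e j))
        = ∑ j ∈ S, e m / (e m - e j) * (e j / (e j - a) ^ 2 *
            (∏ i ∈ S.erase j, e i / (e i - e j)) * (a / (1 + θ * a) - e j / (1 + θ * e j))) := by
      refine Finset.sum_congr rfl fun j hj => ?_
      rw [Finset.erase_insert_of_ne (ne_of_mem_of_not_mem hj hm).symm,
        Finset.prod_insert (fun h => hm (Finset.mem_of_mem_erase h))]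
      ring
    have expand : ((1 + θ * a) ^ 2)⁻¹ * (θ * e m / (1 + θ * e m) * ∏ j ∈ S, (θ * e j / (1 + θ * e j)))
        = θ * e m / (1 + θ * e m) * (((1 + θ * a) ^ 2)⁻¹ * ∏ j ∈ S, (θ * e j / (1 + θ * e j))) := by
      ring
    rw [hsum, expand, Hθ, mul_add, Finset.mul_sum]
    have hsum2 : ∑ j ∈ S, θ * e m / (1 + θ * e m) * (e j / (e j - a) ^ 2 *
          (∏ i ∈ S.erase j, e i / (e i - e j)) * (a / (1 + θ * a) - e j / (1 + θ * e j)))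
        = ∑ j ∈ S, e m / (e m - e j) * (e j / (e j - a) ^ 2 *
            (∏ i ∈ S.erase j, e i / (e i - e j)) * (a / (1 + θ * a) - e j / (1 + θ * e j)))
          + (∑ j ∈ S, e j / (e j - a) ^ 2 * (∏ i ∈ S.erase j, e i / (e i - e j)) *
              (a / (e m - a) - e j / (e m - e j))) * (a / (1 + θ * a) - e m / (1 + θ * e m)) := by
      rw [Finset.sum_mul, ← Finset.sum_add_distrib]
      refine Finset.sum_congr rfl fun j hj => ?_
      rw [show θ * e m / (1 + θ * e m) * (e j / (e j - a) ^ 2 *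
          (∏ i ∈ S.erase j, e i / (e i - e j)) * (a / (1 + θ * a) - e j / (1 + θ * e j)))
        = e j / (e j - a) ^ 2 * (∏ i ∈ S.erase j, e i / (e i - e j)) *
          (θ * e m / (1 + θ * e m) * (a / (1 + θ * a) - e j / (1 + θ * e j))) from by ring,
        I2 j hj]
      ring
    rw [hsum2]
    linear_combination (∏ i ∈ S, e i / (e i - a)) * I1
      + (a / (1 + θ * a) - e m / (1 + θ * e m)) * hcoef

private lemma intInt_inv_sq {b : ℝ} (hb : 0 < b) :
    IntervalIntegrable (fun θ : ℝ => ((1 + θ * b) ^ 2)⁻¹) volume 0 1 := by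
  apply ContinuousOn.intervalIntegrable
  apply ContinuousOn.inv₀
  · fun_prop
  · intro θ hθ
    rw [Set.uIcc_of_le zero_le_one] at hθ
    have h : 0 < 1 + θ * b := by nlinarith [hθ.1]
    exact pow_ne_zero 2 h.ne'

private lemma intInt_frac {b : ℝ} (hb : 0 < b) :
    IntervalIntegrable (fun θ : ℝ => b / (1 + θ * b)) volume 0 1 := by
  apply ContinuousOn.intervalIntegrable
  apply ContinuousOn.div continuousOn_const (by fun_prop)
  intro θ hθ
  rw [Set.uIcc_of_le zero_le_one] at hθ
  have h : 0 < 1 + θ * b := by nlinarith [hθ.1]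
  exact h.ne'

private lemma hasDeriv_aff {b : ℝ} (θ : ℝ) : HasDerivAt (fun t : ℝ => 1 + t * b) b θ := by
  simpa using ((hasDerivAt_id θ).mul_const b).const_add 1

private lemma integral_frac {b : ℝ} (hb : 0 < b) :
    ∫ θ in (0:ℝ)..1, b / (1 + θ * b) = Real.log (1 + b) := by
  have key : ∀ θ ∈ Set.uIcc (0:ℝ) 1,
      HasDerivAt (fun t : ℝ => Real.log (1 + t * b)) (b / (1 + θ * b)) θ := by
    intro θ hθ
    rw [Set.uIcc_of_le zero_le_one] at hθ
    have h : 0 < 1 + θ * b := by nlinarith [hθ.1]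
    have h2 := (Real.hasDerivAt_log h.ne').comp θ (hasDeriv_aff θ)
    rw [div_eq_inv_mul]; exact h2
  rw [intervalIntegral.integral_eq_sub_of_hasDerivAt key (intInt_frac hb)]
  norm_num

private lemma integral_inv_sq {b : ℝ} (hb : 0 < b) :
    ∫ θ in (0:ℝ)..1, ((1 + θ * b) ^ 2)⁻¹ = 1 / (1 + b) := by
  have key : ∀ θ ∈ Set.uIcc (0:ℝ) 1,
      HasDerivAt (fun t : ℝ => -(1 + t * b)⁻¹ / b) (((1 + θ * b) ^ 2)⁻¹) θ := by
    intro θ hθ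
    rw [Set.uIcc_of_le zero_le_one] at hθ
    have h : 0 < 1 + θ * b := by nlinarith [hθ.1]
    have h2 := ((hasDeriv_aff (b := b) θ).inv h.ne').neg.div_const b
    rw [show ((1 + θ * b) ^ 2)⁻¹ = -(-b / (1 + θ * b) ^ 2) / b by field_simp]
    exact h2
  rw [intervalIntegral.integral_eq_sub_of_hasDerivAt key (intInt_inv_sq hb)]
  have h1 : (1:ℝ) + b ≠ 0 := by positivity
  field_simp
  ring

private lemma integral_kernel {a b : ℝ} (ha : 0 < a) (hb : 0 < b) :
    ∫ θ in (0:ℝ)..1, (a / (1 + θ * a) - b / (1 + θ * b)) = Real.log ((1 + a) / (1 + b)) := by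
  rw [intervalIntegral.integral_sub (intInt_frac ha) (intInt_frac hb),
    integral_frac ha, integral_frac hb,
    Real.log_div (by positivity) (by positivity)]

/-- Lemma A.1 (partial fractions integral, second part): for pairwise distinct positive
reals `e 0, …, e (k-1)` (`k ≥ 2`),
`∫₀^1 (1+θe₀)⁻² ∏_{j=1}^{k-1} (1 − 1/(1+θeⱼ)) dθ
  = (1/(1+e₀)) ∏_{i=1}^{k-1} eᵢ/(eᵢ−e₀)
    + ∑_{j=1}^{k-1} (eⱼ/(eⱼ−e₀)²) (∏_{i≠j} eᵢ/(eᵢ−eⱼ)) log((1+e₀)/(1+eⱼ))`. -/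
theorem integral_partial_fractions_unit_interval
    (k : ℕ) (hk : 2 ≤ k) (e : ℕ → ℝ)
    (hpos : ∀ i < k, 0 < e i)
    (hdist : ∀ i < k, ∀ j < k, i ≠ j → e i ≠ e j) :
    ∫ θ in (0 : ℝ)..1,
        ((1 + θ * e 0) ^ 2)⁻¹ * ∏ j ∈ Finset.Ico 1 k, (1 - 1 / (1 + θ * e j))
      = (1 / (1 + e 0)) * ∏ i ∈ Finset.Ico 1 k, e i / (e i - e 0)
        + ∑ j ∈ Finset.Ico 1 k,
            (e j / (e j - e 0) ^ 2) *
              (∏ i ∈ (Finset.Ico 1 k).erase j, e i / (e i - e j)) *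
                Real.log ((1 + e 0) / (1 + e j)) := by
  set S := Finset.Ico 1 k with hS
  have hmem : ∀ j ∈ S, 1 ≤ j ∧ j < k := fun j hj => Finset.mem_Ico.mp hj
  have hpos' : ∀ j ∈ S, 0 < e j := fun j hj => hpos j (hmem j hj).2
  have h0k : 0 < k := lt_of_lt_of_le two_pos hk
  have he0 : 0 < e 0 := hpos 0 h0k
  have hne : ∀ j ∈ S, e j ≠ e 0 := fun j hj =>
    hdist j (hmem j hj).2 0 h0k (Nat.one_le_iff_ne_zero.mp (hmem j hj).1)
  have hEq : Set.EqOn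
      (fun θ : ℝ => ((1 + θ * e 0) ^ 2)⁻¹ * ∏ j ∈ S, (1 - 1 / (1 + θ * e j)))
      (fun θ : ℝ => (∏ i ∈ S, e i / (e i - e 0)) * ((1 + θ * e 0) ^ 2)⁻¹
        + ∑ j ∈ S, e j / (e j - e 0) ^ 2 * (∏ i ∈ S.erase j, e i / (e i - e j)) *
            (e 0 / (1 + θ * e 0) - e j / (1 + θ * e j))) (Set.uIcc 0 1) := by
    intro θ hθ
    rw [Set.uIcc_of_le zero_le_one] at hθ
    have hθ0 : 0 ≤ θ := hθ.1
    have hDa : 1 + θ * e 0 ≠ 0 := by nlinarith [mul_nonneg hθ0 he0.le]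
    have hDe : ∀ j ∈ S, 1 + θ * e j ≠ 0 := fun j hj => by
      nlinarith [mul_nonneg hθ0 (hpos' j hj).le]
    have hprod : ∏ j ∈ S, (1 - 1 / (1 + θ * e j)) = ∏ j ∈ S, (θ * e j / (1 + θ * e j)) :=
      Finset.prod_congr rfl fun j hj => by
        have := hDe j hj
        field_simp
        ring
    simp only
    rw [hprod]
    exact pf_key (e 0) e S (fun j hj => (hpos' j hj).ne') hne
      (fun i hi j hj hij => hdist i (hmem i hi).2 j (hmem j hj).2 hij) θ hDa hDe
  rw [intervalIntegral.integral_congr hEq]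
  have hint1 : IntervalIntegrable
      (fun θ : ℝ => (∏ i ∈ S, e i / (e i - e 0)) * ((1 + θ * e 0) ^ 2)⁻¹) volume 0 1 :=
    (intInt_inv_sq he0).const_mul _
  have hint2 : ∀ j ∈ S, IntervalIntegrable
      (fun θ : ℝ => e j / (e j - e 0) ^ 2 * (∏ i ∈ S.erase j, e i / (e i - e j)) *
        (e 0 / (1 + θ * e 0) - e j / (1 + θ * e j))) volume 0 1 := fun j hj =>
    ((intInt_frac he0).sub (intInt_frac (hpos' j hj))).const_mul _
  have hint3 : IntervalIntegrable
      (fun θ : ℝ => ∑ j ∈ S, e j / (e j - e 0) ^ 2 * (∏ i ∈ S.erase j, e i / (e i - e j)) *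
        (e 0 / (1 + θ * e 0) - e j / (1 + θ * e j))) volume 0 1 := by
    rw [← Finset.sum_fn]
    exact IntervalIntegrable.sum S hint2
  rw [intervalIntegral.integral_add hint1 hint3,
    intervalIntegral.integral_finset_sum hint2,
    intervalIntegral.integral_const_mul, integral_inv_sq he0]
  rw [Finset.sum_congr rfl (fun j hj => by
    rw [intervalIntegral.integral_const_mul, integral_kernel he0 (hpos' j hj)])]
  ring
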